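/- If G is a b-monotone finite simple graph with b(G) ≤ p, then G contains no induced subgraph isomorphic to R_{p+1}. -/

import Mathlib

open SimpleGraph

/-- The degree of a vertex `v` in a simple graph `G`. -/
noncomputable def vdeg {V : Type*} (G : SimpleGraph V) (v : V) : ℕ :=
  Nat.card {w // G.Adj v w}

/-- A Grundy coloring of `G` with `k` colors: a proper coloring whose `k` color classes are
all nonempty (surjectivity) and such that every vertex of a class has a neighbor in every
smaller-indexed class. -/
def IsGrundyColoring {V : Type*} (G : SimpleGraph V) {k : ℕ} (C : V → Fin k) : Prop :=
  (∀ v w, G.Adj v w → C v ≠ C w) ∧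
  Function.Surjective C ∧
  (∀ v : V, ∀ i : Fin k, i < C v → ∃ w, G.Adj v w ∧ C w = i)

/-- The Grundy number of `G`: the largest `k` admitting a Grundy coloring with `k` colors. -/
noncomputable def grundyNum {V : Type*} (G : SimpleGraph V) : ℕ :=
  sSup {k | ∃ C : V → Fin k, IsGrundyColoring G C}

/-- A b-coloring of `G` with `k` colors: a proper coloring such that every color class
contains a vertex having a neighbor in each of the other classes (hence all classes are
nonempty). -/
def IsBColoring {V : Type*} (G : SimpleGraph V) {k : ℕ} (C : V → Fin k) : Prop :=
  (∀ v w, G.Adj v w → C v ≠ C w) ∧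
  (∀ i : Fin k, ∃ v, C v = i ∧ ∀ j : Fin k, j ≠ i → ∃ w, G.Adj v w ∧ C w = j)

/-- The b-chromatic number of `G`: the largest `k` admitting a b-coloring with `k` colors. -/
noncomputable def bChrom {V : Type*} (G : SimpleGraph V) : ℕ :=
  sSup {k | ∃ C : V → Fin k, IsBColoring G C}

/-- The tree `R_k` of radius two: a root (`none`), its `k - 1` children
(`some (Sum.inl i)`), and `k - 2` leaves attached to each child
(`some (Sum.inr (i, j))` is a leaf attached to child `i`). -/
def Rtree (k : ℕ) : SimpleGraph (Option (Fin (k - 1) ⊕ Fin (k - 1) × Fin (k - 2))) :=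
  SimpleGraph.fromRel (fun a b =>
    match a, b with
    | none, some (Sum.inl _) => True
    | some (Sum.inl i), some (Sum.inr (i', _)) => i = i'
    | _, _ => False)

lemma aux_le_bChrom {W : Type*} [Finite W] (G : SimpleGraph W) {k : ℕ}
    (C : W → Fin k) (h : IsBColoring G C) : k ≤ bChrom G := by
  apply le_csSup
  · refine ⟨Nat.card W, ?_⟩
    rintro m ⟨D, hD⟩
    have hg : Function.Injective (fun i : Fin m => (hD.2 i).choose) := by
      intro i j hij
      have hi := (hD.2 i).choose_spec.1
      have hj := (hD.2 j).choose_spec.1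
      simp only at hij
      rw [← hi, ← hj, hij]
    simpa using Nat.card_le_card_of_injective _ hg
  · exact ⟨C, h⟩

/-- the explicit b-coloring of R_{p+1} with p+1 colors -/
def rcol (p : ℕ) : Option (Fin (p + 1 - 1) ⊕ Fin (p + 1 - 1) × Fin (p + 1 - 2)) → Fin (p + 1)
  | none => 0
  | some (Sum.inl i) => ⟨i.val + 1, by omega⟩
  | some (Sum.inr (i, j)) =>
      if j.val < i.val then ⟨j.val + 1, by omega⟩ else ⟨j.val + 2, by have := j.isLt; omega⟩

lemma rcol_isB (p : ℕ) : IsBColoring (Rtree (p + 1)) (rcol p) := by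
  constructor
  · rintro (_ | a) (_ | b) hab
    · simp [Rtree] at hab
    all_goals simp only [Rtree, fromRel_adj] at hab
    · rcases b with b | ⟨b, j⟩
      · simp only [rcol, ne_eq, Fin.ext_iff, Fin.val_mk, Fin.val_zero]
        omega
      · simp at hab
    · rcases a with a | ⟨a, j⟩
      · simp only [rcol, ne_eq, Fin.ext_iff, Fin.val_mk, Fin.val_zero]
        omega
      · simp at hab
    · rcases a with a | ⟨a, ja⟩ <;> rcases b with b | ⟨b, jb⟩
      · simp at hab
      · obtain ⟨-, h | h⟩ := hab
        · subst h
          simp only [rcol, ne_eq, Fin.ext_iff, Fin.val_mk]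
          split <;> simp <;> omega
        · simp at h
      · obtain ⟨-, h | h⟩ := hab
        · simp at h
        · subst h
          simp only [rcol, ne_eq, Fin.ext_iff, Fin.val_mk]
          split <;> simp <;> omega
      · simp at hab
  · intro i
    rcases Nat.eq_zero_or_pos i.val with h0 | hpos
    · -- root
      refine ⟨none, by simp [rcol, Fin.ext_iff, h0.symm]; omega, ?_⟩
      intro j hj
      have hj' : j.val ≠ 0 := by intro h; exact hj (Fin.ext (by omega))
      have hjp : j.val - 1 < p + 1 - 1 := by have := j.isLt; omega
      refine ⟨some (Sum.inl ⟨j.val - 1, hjp⟩), ?_, ?_⟩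
      · simp [Rtree, fromRel_adj]
      · simp only [rcol, Fin.ext_iff, Fin.val_mk]; omega
    · -- child i-1
      have hm : i.val - 1 < p + 1 - 1 := by have := i.isLt; omega
      set m : ℕ := i.val - 1 with hmdef
      refine ⟨some (Sum.inl ⟨m, hm⟩), by simp only [rcol, Fin.ext_iff, Fin.val_mk]; omega, ?_⟩
      intro j hj
      rcases Nat.eq_zero_or_pos j.val with hj0 | hjpos
      · refine ⟨none, ?_, ?_⟩
        · simp [Rtree, fromRel_adj]
        · simp only [rcol, Fin.ext_iff, Fin.val_zero]; omega
      · have hji : j.val ≠ i.val := by simpa [Fin.ext_iff] using hj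
        rcases lt_or_gt_of_ne hji with hlt | hgt
        · -- j < i : leaf j-1, colored j-1+1 = j
          have hl : j.val - 1 < p + 1 - 2 := by omega
          refine ⟨some (Sum.inr (⟨m, hm⟩, ⟨j.val - 1, hl⟩)), ?_, ?_⟩
          · simp [Rtree, fromRel_adj]
          · simp only [rcol, Fin.ext_iff, Fin.val_mk]
            split <;> (simp only [Fin.val_mk]; omega)
        · -- j > i : leaf j-2, colored j-2+2 = j since j-2 ≥ m
          have hl : j.val - 2 < p + 1 - 2 := by have := j.isLt; omega
          refine ⟨some (Sum.inr (⟨m, hm⟩, ⟨j.val - 2, hl⟩)), ?_, ?_⟩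
          · simp [Rtree, fromRel_adj]
          · simp only [rcol, Fin.ext_iff, Fin.val_mk]
            split <;> (simp only [Fin.val_mk]; omega)

lemma embed_bcol {W U : Type*} {H : SimpleGraph W} {G : SimpleGraph U} (e : H ↪g G)
    {k : ℕ} (C : W → Fin k) (h : IsBColoring H C) :
    IsBColoring (G.induce (Set.range e)) (fun a => C ((Equiv.ofInjective _ e.injective).symm a)) := by
  set eqv := Equiv.ofInjective _ e.injective with heq
  have hadj : ∀ a b : Set.range ⇑e, (G.induce (Set.range ⇑e)).Adj a b ↔ H.Adj (eqv.symm a) (eqv.symm b) := by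
    intro a b
    have ha : ⇑e (eqv.symm a) = a := Equiv.apply_ofInjective_symm e.injective a
    have hb : ⇑e (eqv.symm b) = b := Equiv.apply_ofInjective_symm e.injective b
    constructor
    · intro hab
      rw [← e.map_adj_iff, ha, hb]
      exact hab
    · intro hab
      have := e.map_adj_iff.mpr hab
      rw [ha, hb] at this
      exact this
  constructor
  · intro a b hab
    exact h.1 _ _ ((hadj a b).mp hab)
  · intro i
    obtain ⟨v, hv, hv2⟩ := h.2 i
    refine ⟨eqv v, by simpa using hv, ?_⟩
    intro j hj
    obtain ⟨w, hw, hw2⟩ := hv2 j hj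
    refine ⟨eqv w, ?_, by simpa using hw2⟩
    rw [hadj]
    simpa using hw

/-- If `G` is a b-monotone finite simple graph with `b(G) ≤ p`, then `G` contains no
induced subgraph isomorphic to `R_{p+1}`. -/
theorem stmt13 {V : Type*} [Fintype V] (G : SimpleGraph V) (p : ℕ)
    (hmono : ∀ s : Set V, bChrom (G.induce s) ≤ bChrom G)
    (hb : bChrom G ≤ p) :
    IsEmpty (Rtree (p + 1) ↪g G) := by
  constructor
  intro e
  have h1 := embed_bcol e (rcol p) (rcol_isB p)
  have h2 := aux_le_bChrom _ _ h1
  have := (h2.trans (hmono _)).trans hb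
  omega
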